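/- arXiv:1503.00289 — 3 statements merged into one kernel-verified Lean document; each statement's English description precedes it below -/
import Mathlib

section
/- Let V be a vector space over a field K equipped with an alternating bilinear form ⟨·,·⟩ (so ⟨x,x⟩ = 0 for all x ∈ V). Let W, L_a, L_b ⊆ V be isotropic subspaces (the form vanishes identically on each of them) such that V = L_a ⊕ W and V = L_b ⊕ W, and let τ_a, τ_b : V → V be the linear projections onto L_a and onto L_b along W. Then the bilinear form Q(h₁, h₂) := ⟨τ_a(h₁), τ_b(h₂)⟩ is symmetric: Q(h₁, h₂) = Q(h₂, h₁) for all h₁, h₂ ∈ V. -/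
/-- **Symmetry of the period form `Q`.**
Let `V` be a vector space over a field `K` with an alternating bilinear form `B`.
Let `W`, `La`, `Lb` be isotropic subspaces with `V = La ⊕ W` and `V = Lb ⊕ W`,
and let `τa`, `τb` be the projections onto `La` and `Lb` along `W`.
Then `Q(h₁,h₂) = B (τa h₁) (τb h₂)` is symmetric. -/
theorem period_form_symmetric {K V : Type*} [Field K] [AddCommGroup V] [Module K V]
    (B : V →ₗ[K] V →ₗ[K] K) (halt : ∀ x, B x x = 0)
    (W La Lb : Submodule K V)
    (hW : ∀ x ∈ W, ∀ y ∈ W, B x y = 0)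
    (hLa : ∀ x ∈ La, ∀ y ∈ La, B x y = 0)
    (hLb : ∀ x ∈ Lb, ∀ y ∈ Lb, B x y = 0)
    (hcompa : IsCompl La W) (hcompb : IsCompl Lb W)
    (τa τb : V →ₗ[K] V)
    (hτa : ∀ v, τa v ∈ La) (hτa' : ∀ v, v - τa v ∈ W)
    (hτb : ∀ v, τb v ∈ Lb) (hτb' : ∀ v, v - τb v ∈ W) :
    ∀ h₁ h₂ : V, B (τa h₁) (τb h₂) = B (τa h₂) (τb h₁) := by
  have hanti : ∀ x y : V, B x y = - B y x := by
    intro x y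
    have h := halt (x + y)
    simp [map_add, halt] at h
    linear_combination h
  intro h₁ h₂
  have hd1 : τa h₁ - τb h₁ ∈ W := by
    have := W.sub_mem (hτb' h₁) (hτa' h₁)
    simpa using this
  have hd2 : τa h₂ - τb h₂ ∈ W := by
    have := W.sub_mem (hτb' h₂) (hτa' h₂)
    simpa using this
  have hz := hW _ hd1 _ hd2
  have haa := hLa _ (hτa h₁) _ (hτa h₂)
  have hbb := hLb _ (hτb h₁) _ (hτb h₂)
  have hba := hanti (τb h₁) (τa h₂)
  simp only [map_sub, LinearMap.sub_apply, haa, hbb] at hz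
  linear_combination -hz - hba
end

section
/- Let V be a complex vector space equipped with an alternating ℂ-bilinear form ω and a conjugate-linear involution σ : V → V satisfying ω(σx, σy) = conj(ω(x,y)) for all x, y ∈ V. Let W ⊆ V be a subspace on which ω vanishes identically and such that i·ω(w, σw) is a strictly positive real number for every nonzero w ∈ W. Let L_a, L_b ⊆ V be σ-invariant subspaces on which ω vanishes identically, with L_a ∩ L_b = 0, V = L_a ⊕ W and V = L_b ⊕ W, and let τ_a, τ_b : V → V be the projections onto L_a and onto L_b along W. Then for every nonzero vector h ∈ V with σ(h) = h one has i·ω(τ_a h − τ_b h, σ(τ_a h − τ_b h)) = 2·Im(ω(τ_a h, σ(τ_b h))), and this quantity is strictly positive; in particular Im(ω(τ_a h, σ(τ_b h))) > 0. -/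
/-- **Positivity of the imaginary part of the period form.**
`V` is a complex vector space with an alternating bilinear form `ω` and a
conjugate-linear involution `σ` compatible with `ω`.  `W` is an isotropic
subspace on which `i·ω(w, σw) > 0` for `w ≠ 0`, and `La`, `Lb` are
σ-invariant isotropic subspaces with `La ∩ Lb = 0`, `V = La ⊕ W`,
`V = Lb ⊕ W`, with projections `τa`, `τb` onto `La`, `Lb` along `W`.
Then for every nonzero `h` fixed by `σ`,
`i·ω(τa h − τb h, σ(τa h − τb h)) = 2·Im(ω(τa h, σ(τb h)))` and this is
strictly positive. -/
theorem period_form_positive {V : Type*} [AddCommGroup V] [Module ℂ V]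
    (ω : V →ₗ[ℂ] V →ₗ[ℂ] ℂ) (halt : ∀ x, ω x x = 0)
    (σ : V → V)
    (hσadd : ∀ x y, σ (x + y) = σ x + σ y)
    (hσsmul : ∀ (c : ℂ) (v : V), σ (c • v) = (starRingEnd ℂ) c • σ v)
    (hσinv : ∀ v, σ (σ v) = v)
    (hσω : ∀ x y, ω (σ x) (σ y) = (starRingEnd ℂ) (ω x y))
    (W La Lb : Submodule ℂ V)
    (hW : ∀ x ∈ W, ∀ y ∈ W, ω x y = 0)
    (hWpos : ∀ w ∈ W, w ≠ 0 → ∃ r : ℝ, 0 < r ∧ Complex.I * ω w (σ w) = (r : ℂ))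
    (hLaσ : ∀ x ∈ La, σ x ∈ La) (hLbσ : ∀ x ∈ Lb, σ x ∈ Lb)
    (hLa : ∀ x ∈ La, ∀ y ∈ La, ω x y = 0)
    (hLb : ∀ x ∈ Lb, ∀ y ∈ Lb, ω x y = 0)
    (hab : La ⊓ Lb = ⊥)
    (hcompa : IsCompl La W) (hcompb : IsCompl Lb W)
    (τa τb : V →ₗ[ℂ] V)
    (hτa : ∀ v, τa v ∈ La) (hτa' : ∀ v, v - τa v ∈ W)
    (hτb : ∀ v, τb v ∈ Lb) (hτb' : ∀ v, v - τb v ∈ W) :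
    ∀ h : V, h ≠ 0 → σ h = h →
      Complex.I * ω (τa h - τb h) (σ (τa h - τb h))
          = ((2 * (ω (τa h) (σ (τb h))).im : ℝ) : ℂ)
        ∧ 0 < (ω (τa h) (σ (τb h))).im := by

  intro h hh hσh
  have hσsub : ∀ x y, σ (x - y) = σ x - σ y := by
    intro x y
    have hxy : x - y = x + (-1 : ℂ) • y := by
      simp [sub_eq_add_neg]
    rw [hxy, hσadd, hσsmul]
    simp [sub_eq_add_neg]
  have hskew : ∀ x y, ω x y = -ω y x := by
    intro x y
    have h0 := halt (x + y)
    simp only [map_add, LinearMap.add_apply, halt] at h0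
    linear_combination h0
  set a := τa h with ha
  set b := τb h with hb
  have hwW : a - b ∈ W := by
    have := W.sub_mem (hτb' h) (hτa' h)
    simpa [sub_sub_sub_cancel_left] using this
  have hwne : a - b ≠ 0 := by
    intro hw
    have hab0 : a = b := sub_eq_zero.mp hw
    have hmem : a ∈ La ⊓ Lb := ⟨hτa h, hab0 ▸ hτb h⟩
    rw [hab] at hmem
    have ha0 : a = 0 := hmem
    have hhW : h ∈ W := by
      have := hτa' h
      rw [← ha, ha0, sub_zero] at this
      exact this
    obtain ⟨r, hr, hre⟩ := hWpos h hhW hh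
    rw [hσh, halt, mul_zero] at hre
    exact hr.ne (by exact_mod_cast hre)
  have h1 : ω a (σ a) = 0 := hLa a (hτa h) (σ a) (hLaσ a (hτa h))
  have h2 : ω b (σ b) = 0 := hLb b (hτb h) (σ b) (hLbσ b (hτb h))
  set z := ω a (σ b) with hz
  have h3 : ω b (σ a) = -(starRingEnd ℂ) z := by
    rw [hskew b (σ a)]
    have h4 : ω (σ a) (σ (σ b)) = (starRingEnd ℂ) z := hσω a (σ b)
    rw [hσinv] at h4
    rw [h4]
  have hexp : ω (a - b) (σ (a - b)) = (starRingEnd ℂ) z - z := by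
    rw [hσsub]
    simp only [map_sub, LinearMap.sub_apply]
    rw [h1, h2, h3, ← hz]
    ring
  have key : Complex.I * ((starRingEnd ℂ) z - z) = ((2 * z.im : ℝ) : ℂ) := by
    simp [Complex.ext_iff, Complex.mul_re, Complex.mul_im]
    ring
  obtain ⟨r, hr, hre⟩ := hWpos (a - b) hwW hwne
  have heq : ((2 * z.im : ℝ) : ℂ) = (r : ℂ) := by
    rw [← key, ← hexp]; exact hre
  have h2im : 2 * z.im = r := by exact_mod_cast heq
  exact ⟨by rw [hexp, key], by linarith⟩
end

section
/- Fix τ ∈ ℂ with Im τ > 0, and let θ₁₁(z) = ∑_{n ∈ ℤ} exp(πiτ(n+1/2)² + 2πi(n+1/2)(z+1/2)). Let n ≥ 1 be an integer, let α : ℤ/nℤ → ℂ be any function, and let t, z ∈ ℂ. Then ∑_{k ∈ ℤ/nℤ} [ θ₁₁(t + z − α_k − α_{k+1}) · θ₁₁(α_k − α_{k+1}) · ∏_{l ∈ ℤ/nℤ, l ∉ {k, k+1}} θ₁₁(t − α_l)·θ₁₁(z − α_l) ] = 0. -/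
open Complex

/-- The Jacobi theta function with characteristic `(1,1)` for the modulus `τ`:
`θ₁₁(z) = ∑_{n ∈ ℤ} exp(πiτ(n+1/2)² + 2πi(n+1/2)(z+1/2))`. -/
noncomputable def theta11 (τ z : ℂ) : ℂ :=
  ∑' n : ℤ,
    Complex.exp ((Real.pi : ℂ) * Complex.I * τ * ((n : ℂ) + 1 / 2) ^ 2
      + 2 * (Real.pi : ℂ) * Complex.I * ((n : ℂ) + 1 / 2) * (z + 1 / 2))

namespace FayAux

/-- The summand of the theta series. -/
noncomputable def ft (τ : ℂ) (n : ℤ) (z : ℂ) : ℂ :=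
  Complex.exp ((Real.pi : ℂ) * Complex.I * τ * ((n : ℂ) + 1 / 2) ^ 2
      + 2 * (Real.pi : ℂ) * Complex.I * ((n : ℂ) + 1 / 2) * (z + 1 / 2))

lemma theta11_eq (τ z : ℂ) : theta11 τ z = ∑' n : ℤ, ft τ n z := rfl

lemma ft_eq (τ : ℂ) (n : ℤ) (z : ℂ) :
    ft τ n z = Complex.exp ((Real.pi : ℂ) * Complex.I * τ / 4
        + (Real.pi : ℂ) * Complex.I * (z + 1 / 2)) *
      jacobiTheta₂_term n (z + 1 / 2 + τ / 2) τ := by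
  rw [ft, jacobiTheta₂_term, ← Complex.exp_add]
  congr 1
  push_cast
  ring

lemma summable_norm_ft {τ : ℂ} (hτ : 0 < τ.im) (z : ℂ) :
    Summable fun n : ℤ => ‖ft τ n z‖ := by
  have h1 : Summable fun n : ℤ => jacobiTheta₂_term n (z + 1 / 2 + τ / 2) τ :=
    (summable_jacobiTheta₂_term_iff _ τ).mpr hτ
  have h2 := (summable_norm_iff.mpr h1).mul_left
    ‖Complex.exp ((Real.pi : ℂ) * Complex.I * τ / 4
        + (Real.pi : ℂ) * Complex.I * (z + 1 / 2))‖
  refine h2.congr fun n => ?_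
  rw [ft_eq, norm_mul]

lemma ft_reflect (τ z : ℂ) (n : ℤ) : ft τ (-1 - n) (-z) = - ft τ n z := by
  rw [ft, ft,
    show -Complex.exp ((Real.pi : ℂ) * Complex.I * τ * ((n : ℂ) + 1 / 2) ^ 2
      + 2 * (Real.pi : ℂ) * Complex.I * ((n : ℂ) + 1 / 2) * (z + 1 / 2)) =
      Complex.exp ((Real.pi : ℂ) * Complex.I +
        ((Real.pi : ℂ) * Complex.I * τ * ((n : ℂ) + 1 / 2) ^ 2
        + 2 * (Real.pi : ℂ) * Complex.I * ((n : ℂ) + 1 / 2) * (z + 1 / 2))) from by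
        rw [Complex.exp_add ((Real.pi : ℂ) * Complex.I), Complex.exp_pi_mul_I]; ring,
    Complex.exp_eq_exp_iff_exists_int]
  exact ⟨-n - 1, by push_cast; ring⟩

lemma theta11_neg (τ z : ℂ) : theta11 τ (-z) = - theta11 τ z := by
  rw [theta11_eq, theta11_eq,
    ← Equiv.tsum_eq (Equiv.subLeft (-1 : ℤ)) (fun n => ft τ n (-z)), ← tsum_neg]
  refine tsum_congr fun n => ?_
  have : Equiv.subLeft (-1 : ℤ) n = -1 - n := rfl
  rw [this, ft_reflect]

lemma theta11_zero (τ : ℂ) : theta11 τ 0 = 0 := by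
  have h := theta11_neg τ 0
  rw [neg_zero] at h
  linear_combination (1/2 : ℂ) * h

variable (τ : ℂ)

/-- Coefficient of the lattice expansion of a product of two theta values. -/
noncomputable def cc (τ : ℂ) (p q : ℤ) : ℂ :=
  if (p + q) % 2 = 0 then 0
  else (if p % 2 = 0 then 1 else -1) *
    Complex.exp ((Real.pi : ℂ) * Complex.I * τ * ((p : ℂ) ^ 2 + (q : ℂ) ^ 2) / 2)

/-- Summand of the lattice expansion of `θ(x+y)θ(x-y)`. -/
noncomputable def gg (τ x y : ℂ) (pq : ℤ × ℤ) : ℂ :=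
  cc τ pq.1 pq.2 *
    Complex.exp (2 * (Real.pi : ℂ) * Complex.I * ((pq.1 : ℂ) * x + (pq.2 : ℂ) * y))

def psi (mn : ℤ × ℤ) : ℤ × ℤ := (mn.1 + mn.2 + 1, mn.1 - mn.2)

lemma psi_inj : Function.Injective psi := by
  intro a b h
  simp only [psi, Prod.ext_iff] at h ⊢
  omega

lemma gg_eq_zero {x y : ℂ} {pq : ℤ × ℤ} (h : pq ∉ Set.range psi) : gg τ x y pq = 0 := by
  rcases pq with ⟨p, q⟩
  by_cases hpar : (p + q) % 2 = 0
  · rw [gg, cc, if_pos hpar, zero_mul]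
  · exact absurd ⟨((p + q - 1) / 2, (p - q - 1) / 2), by
      simp only [psi, Prod.ext_iff]; omega⟩ h

end FayAux

namespace FayAux

lemma gg_psi (τ x y : ℂ) (mn : ℤ × ℤ) :
    gg τ x y (psi mn) = ft τ mn.1 (x + y) * ft τ mn.2 (x - y) := by
  obtain ⟨m, n⟩ := mn
  rw [ft, ft, ← Complex.exp_add]
  show gg τ x y (m + n + 1, m - n) = _
  rw [gg, cc]
  simp only
  rw [if_neg (by omega : ¬ (m + n + 1 + (m - n)) % 2 = 0)]
  rcases Int.emod_two_eq_zero_or_one (m + n + 1) with h | h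
  · obtain ⟨j, hj⟩ : ∃ j, m + n + 1 = 2 * j := ⟨(m + n + 1) / 2, by omega⟩
    have hjc : (m : ℂ) + n + 1 = 2 * j := by exact_mod_cast congrArg (Int.cast : ℤ → ℂ) hj
    rw [if_pos h, one_mul, ← Complex.exp_add, Complex.exp_eq_exp_iff_exists_int]
    exact ⟨-j, by push_cast; linear_combination (-(Real.pi : ℂ) * Complex.I) * hjc⟩
  · obtain ⟨j, hj⟩ : ∃ j, m + n + 1 = 2 * j + 1 := ⟨(m + n) / 2, by omega⟩
    have hjc : (m : ℂ) + n + 1 = 2 * j + 1 := by exact_mod_cast congrArg (Int.cast : ℤ → ℂ) hj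
    rw [if_neg (by omega : ¬ (m + n + 1) % 2 = 0),
      show (-1 : ℂ) = Complex.exp ((Real.pi : ℂ) * Complex.I) from Complex.exp_pi_mul_I.symm,
      ← Complex.exp_add, ← Complex.exp_add, Complex.exp_eq_exp_iff_exists_int]
    exact ⟨-j, by push_cast; linear_combination (-(Real.pi : ℂ) * Complex.I) * hjc⟩

end FayAux

namespace FayAux

lemma theta_mul {τ : ℂ} (hτ : 0 < τ.im) (x y : ℂ) :
    theta11 τ (x + y) * theta11 τ (x - y) = ∑' pq : ℤ × ℤ, gg τ x y pq := by
  have hsupp : Function.support (gg τ x y) ⊆ Set.range psi := by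
    intro pq h
    by_contra hr
    exact h (gg_eq_zero τ hr)
  rw [theta11_eq, theta11_eq,
    tsum_mul_tsum_of_summable_norm (summable_norm_ft hτ (x + y)) (summable_norm_ft hτ (x - y)),
    ← Function.Injective.tsum_eq psi_inj hsupp]
  exact tsum_congr fun mn => (gg_psi τ x y mn).symm

lemma summable_norm_gg {τ : ℂ} (hτ : 0 < τ.im) (x y : ℂ) :
    Summable fun pq : ℤ × ℤ => ‖gg τ x y pq‖ := by
  refine (Function.Injective.summable_iff psi_inj fun pq h => ?_).mp ?_
  · rw [gg_eq_zero τ h, norm_zero]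
  · refine ((summable_norm_ft hτ (x + y)).mul_norm (summable_norm_ft hτ (x - y))).congr
      fun mn => ?_
    rw [Function.comp_apply, gg_psi, norm_mul]

end FayAux

namespace FayAux

noncomputable def eps (p : ℤ) : ℂ := if p % 2 = 0 then 1 else -1

lemma eps_eq (p : ℤ) : eps p = 1 ∨ eps p = -1 := by
  rw [eps]; split <;> simp

lemma cc_eq (τ : ℂ) (p q : ℤ) :
    cc τ p q = (1 - eps p * eps q) / 2 * eps p *
      Complex.exp ((Real.pi : ℂ) * Complex.I * τ * ((p : ℂ) ^ 2 + (q : ℂ) ^ 2) / 2) := by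
  rw [cc, eps, eps]
  rcases Int.emod_two_eq_zero_or_one p with hp | hp <;>
    rcases Int.emod_two_eq_zero_or_one q with hq | hq
  · rw [if_pos (show (p + q) % 2 = 0 by omega), if_pos hp, if_pos hq]; ring
  · rw [if_neg (show ¬ (p + q) % 2 = 0 by omega), if_pos hp,
      if_neg (show ¬ q % 2 = 0 by omega)]; ring
  · rw [if_neg (show ¬ (p + q) % 2 = 0 by omega), if_neg (show ¬ p % 2 = 0 by omega),
      if_pos hq]; ring
  · rw [if_pos (show (p + q) % 2 = 0 by omega), if_neg (show ¬ p % 2 = 0 by omega),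
      if_neg (show ¬ q % 2 = 0 by omega)]; ring

lemma key_aux (x y z w W E1 E2 E3 E4 E5 E6 : ℂ)
    (hx : x = 1 ∨ x = -1) (hy : y = 1 ∨ y = -1) (hz : z = 1 ∨ z = -1) (hw : w = 1 ∨ w = -1)
    (e1 : E1 * E2 = W) (e2 : E3 * E4 = W) (e3 : E5 * E6 = W) :
    (1 - y * x) / 2 * y * E1 * ((1 - z * w) / 2 * z * E2) +
    (1 - z * y) / 2 * z * E3 * ((1 - x * w) / 2 * x * E4) +
    (1 - x * z) / 2 * x * E5 * ((1 - y * w) / 2 * y * E6) = 0 := by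
  have h : (1 - y * x) / 2 * y * E1 * ((1 - z * w) / 2 * z * E2) +
      (1 - z * y) / 2 * z * E3 * ((1 - x * w) / 2 * x * E4) +
      (1 - x * z) / 2 * x * E5 * ((1 - y * w) / 2 * y * E6) =
      ((1 - y * x) / 2 * y * ((1 - z * w) / 2 * z) +
       (1 - z * y) / 2 * z * ((1 - x * w) / 2 * x) +
       (1 - x * z) / 2 * x * ((1 - y * w) / 2 * y)) * W := by
    linear_combination ((1 - y * x) / 2 * y * ((1 - z * w) / 2 * z)) * e1 +
      ((1 - z * y) / 2 * z * ((1 - x * w) / 2 * x)) * e2 +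
      ((1 - x * z) / 2 * x * ((1 - y * w) / 2 * y)) * e3
  rw [h]
  rcases hx with hx | hx <;> rcases hy with hy | hy <;> rcases hz with hz | hz <;>
    rcases hw with hw | hw <;> rw [hx, hy, hz, hw] <;> ring

lemma key (τ : ℂ) (a b c d : ℤ) :
    cc τ b a * cc τ c d + cc τ c b * cc τ a d + cc τ a c * cc τ b d = 0 := by
  rw [cc_eq τ b a, cc_eq τ c d, cc_eq τ c b, cc_eq τ a d, cc_eq τ a c, cc_eq τ b d]
  refine key_aux (eps a) (eps b) (eps c) (eps d)
    (Complex.exp ((Real.pi : ℂ) * Complex.I * τ *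
      ((a : ℂ) ^ 2 + (b : ℂ) ^ 2 + (c : ℂ) ^ 2 + (d : ℂ) ^ 2) / 2))
    _ _ _ _ _ _
    (eps_eq a) (eps_eq b) (eps_eq c) (eps_eq d) ?_ ?_ ?_ <;>
  · rw [← Complex.exp_add]
    congr 1
    ring

end FayAux

namespace FayAux

def eqv1 : (ℤ × ℤ) × (ℤ × ℤ) ≃ (ℤ × ℤ) × (ℤ × ℤ) :=
  ⟨fun u => ((u.1.2, u.1.1), u.2), fun u => ((u.1.2, u.1.1), u.2),
    fun u => rfl, fun u => rfl⟩

def eqv2 : (ℤ × ℤ) × (ℤ × ℤ) ≃ (ℤ × ℤ) × (ℤ × ℤ) :=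
  ⟨fun u => ((u.2.1, u.1.2), (u.1.1, u.2.2)), fun u => ((u.2.1, u.1.2), (u.1.1, u.2.2)),
    fun u => rfl, fun u => rfl⟩

def eqv3 : (ℤ × ℤ) × (ℤ × ℤ) ≃ (ℤ × ℤ) × (ℤ × ℤ) :=
  ⟨fun u => ((u.1.1, u.2.1), (u.1.2, u.2.2)), fun u => ((u.1.1, u.2.1), (u.1.2, u.2.2)),
    fun u => rfl, fun u => rfl⟩

lemma ptwise (τ A B C D : ℂ) (u : (ℤ × ℤ) × (ℤ × ℤ)) :
    gg τ B A (eqv1 u).1 * gg τ C D (eqv1 u).2 +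
    gg τ C B (eqv2 u).1 * gg τ A D (eqv2 u).2 +
    gg τ A C (eqv3 u).1 * gg τ B D (eqv3 u).2 = 0 := by
  obtain ⟨⟨a, b⟩, ⟨c, d⟩⟩ := u
  show gg τ B A (b, a) * gg τ C D (c, d) + gg τ C B (c, b) * gg τ A D (a, d) +
    gg τ A C (a, c) * gg τ B D (b, d) = 0
  simp only [gg]
  have hV : ∀ (p q : ℤ) (X Y : ℂ),
      Complex.exp (2 * (Real.pi : ℂ) * Complex.I * ((p : ℂ) * X + (q : ℂ) * Y)) =
      Complex.exp (2 * (Real.pi : ℂ) * Complex.I * ((p : ℂ) * X + (q : ℂ) * Y)) := fun _ _ _ _ => rfl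
  have e1 : Complex.exp (2 * (Real.pi : ℂ) * Complex.I * ((b : ℂ) * B + (a : ℂ) * A)) *
      Complex.exp (2 * (Real.pi : ℂ) * Complex.I * ((c : ℂ) * C + (d : ℂ) * D)) =
      Complex.exp (2 * (Real.pi : ℂ) * Complex.I *
        ((a : ℂ) * A + (b : ℂ) * B + (c : ℂ) * C + (d : ℂ) * D)) := by
    rw [← Complex.exp_add]; congr 1; ring
  have e2 : Complex.exp (2 * (Real.pi : ℂ) * Complex.I * ((c : ℂ) * C + (b : ℂ) * B)) *
      Complex.exp (2 * (Real.pi : ℂ) * Complex.I * ((a : ℂ) * A + (d : ℂ) * D)) =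
      Complex.exp (2 * (Real.pi : ℂ) * Complex.I *
        ((a : ℂ) * A + (b : ℂ) * B + (c : ℂ) * C + (d : ℂ) * D)) := by
    rw [← Complex.exp_add]; congr 1; ring
  have e3 : Complex.exp (2 * (Real.pi : ℂ) * Complex.I * ((a : ℂ) * A + (c : ℂ) * C)) *
      Complex.exp (2 * (Real.pi : ℂ) * Complex.I * ((b : ℂ) * B + (d : ℂ) * D)) =
      Complex.exp (2 * (Real.pi : ℂ) * Complex.I *
        ((a : ℂ) * A + (b : ℂ) * B + (c : ℂ) * C + (d : ℂ) * D)) := by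
    rw [← Complex.exp_add]; congr 1; ring
  have hk := key τ a b c d
  linear_combination (cc τ b a * cc τ c d) * e1 + (cc τ c b * cc τ a d) * e2 +
    (cc τ a c * cc τ b d) * e3 +
    (Complex.exp (2 * (Real.pi : ℂ) * Complex.I *
        ((a : ℂ) * A + (b : ℂ) * B + (c : ℂ) * C + (d : ℂ) * D))) * hk

set_option maxHeartbeats 2000000 in
lemma core {τ : ℂ} (hτ : 0 < τ.im) (A B C D : ℂ) :
    theta11 τ (B + A) * theta11 τ (B - A) * (theta11 τ (C + D) * theta11 τ (C - D)) +
    theta11 τ (C + B) * theta11 τ (C - B) * (theta11 τ (A + D) * theta11 τ (A - D)) +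
    theta11 τ (A + C) * theta11 τ (A - C) * (theta11 τ (B + D) * theta11 τ (B - D)) = 0 := by
  have s1 : Summable (fun v : (ℤ × ℤ) × (ℤ × ℤ) => gg τ B A v.1 * gg τ C D v.2) :=
    summable_mul_of_summable_norm (summable_norm_gg hτ B A) (summable_norm_gg hτ C D)
  have s2 : Summable (fun v : (ℤ × ℤ) × (ℤ × ℤ) => gg τ C B v.1 * gg τ A D v.2) :=
    summable_mul_of_summable_norm (summable_norm_gg hτ C B) (summable_norm_gg hτ A D)
  have s3 : Summable (fun v : (ℤ × ℤ) × (ℤ × ℤ) => gg τ A C v.1 * gg τ B D v.2) :=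
    summable_mul_of_summable_norm (summable_norm_gg hτ A C) (summable_norm_gg hτ B D)
  have t1 : Summable (fun u : (ℤ × ℤ) × (ℤ × ℤ) =>
      gg τ B A (eqv1 u).1 * gg τ C D (eqv1 u).2) := eqv1.summable_iff.mpr s1
  have t2 : Summable (fun u : (ℤ × ℤ) × (ℤ × ℤ) =>
      gg τ C B (eqv2 u).1 * gg τ A D (eqv2 u).2) := eqv2.summable_iff.mpr s2
  have t3 : Summable (fun u : (ℤ × ℤ) × (ℤ × ℤ) =>
      gg τ A C (eqv3 u).1 * gg τ B D (eqv3 u).2) := eqv3.summable_iff.mpr s3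
  rw [theta_mul hτ B A, theta_mul hτ C D, theta_mul hτ C B, theta_mul hτ A D,
    theta_mul hτ A C, theta_mul hτ B D,
    tsum_mul_tsum_of_summable_norm (summable_norm_gg hτ B A) (summable_norm_gg hτ C D),
    tsum_mul_tsum_of_summable_norm (summable_norm_gg hτ C B) (summable_norm_gg hτ A D),
    tsum_mul_tsum_of_summable_norm (summable_norm_gg hτ A C) (summable_norm_gg hτ B D),
    ← Equiv.tsum_eq eqv1 (fun v : (ℤ × ℤ) × (ℤ × ℤ) => gg τ B A v.1 * gg τ C D v.2),
    ← Equiv.tsum_eq eqv2 (fun v : (ℤ × ℤ) × (ℤ × ℤ) => gg τ C B v.1 * gg τ A D v.2),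
    ← Equiv.tsum_eq eqv3 (fun v : (ℤ × ℤ) × (ℤ × ℤ) => gg τ A C v.1 * gg τ B D v.2),
    ← Summable.tsum_add t1 t2, ← Summable.tsum_add (t1.add t2) t3]
  calc ∑' u : (ℤ × ℤ) × (ℤ × ℤ),
        (gg τ B A (eqv1 u).1 * gg τ C D (eqv1 u).2 +
         gg τ C B (eqv2 u).1 * gg τ A D (eqv2 u).2 +
         gg τ A C (eqv3 u).1 * gg τ B D (eqv3 u).2)
      = ∑' _ : (ℤ × ℤ) × (ℤ × ℤ), (0 : ℂ) := tsum_congr fun u => ptwise τ A B C D u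
    _ = 0 := tsum_zero

end FayAux

namespace FayAux

noncomputable def AA (τ t z x y : ℂ) : ℂ := theta11 τ (t + z - x - y) * theta11 τ (x - y)

noncomputable def BB (τ t z x : ℂ) : ℂ := theta11 τ (t - x) * theta11 τ (z - x)

lemma AA_swap (τ t z x y : ℂ) : AA τ t z y x = - AA τ t z x y := by
  rw [AA, AA, show y - x = -(x - y) by ring, theta11_neg,
    show t + z - y - x = t + z - x - y by ring]
  ring

lemma AA_self (τ t z x : ℂ) : AA τ t z x x = 0 := by
  rw [AA, sub_self, theta11_zero, mul_zero]

lemma three_term {τ : ℂ} (hτ : 0 < τ.im) (t z x y w : ℂ) :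
    AA τ t z x y * BB τ t z w + AA τ t z y w * BB τ t z x + AA τ t z w x * BB τ t z y = 0 := by
  have h := core hτ ((t + z) / 2 - x) ((t + z) / 2 - y) ((t + z) / 2 - w) ((t - z) / 2)
  rw [show (t + z) / 2 - y + ((t + z) / 2 - x) = t + z - x - y by ring,
    show (t + z) / 2 - y - ((t + z) / 2 - x) = x - y by ring,
    show (t + z) / 2 - w + (t - z) / 2 = t - w by ring,
    show (t + z) / 2 - w - (t - z) / 2 = z - w by ring,
    show (t + z) / 2 - w + ((t + z) / 2 - y) = t + z - y - w by ring,
    show (t + z) / 2 - w - ((t + z) / 2 - y) = y - w by ring,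
    show (t + z) / 2 - x + (t - z) / 2 = t - x by ring,
    show (t + z) / 2 - x - (t - z) / 2 = z - x by ring,
    show (t + z) / 2 - x + ((t + z) / 2 - w) = t + z - w - x by ring,
    show (t + z) / 2 - x - ((t + z) / 2 - w) = w - x by ring,
    show (t + z) / 2 - y + (t - z) / 2 = t - y by ring,
    show (t + z) / 2 - y - (t - z) / 2 = z - y by ring] at h
  rw [AA, AA, AA, BB, BB, BB]
  exact h

lemma path {τ : ℂ} (hτ : 0 < τ.im) (t z : ℂ) (a : ℕ → ℂ) :
    ∀ m : ℕ, 1 ≤ m →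
    ∑ k ∈ Finset.range m, AA τ t z (a k) (a (k + 1)) *
      ∏ l ∈ (Finset.range (m + 1)).filter (fun l => l ≠ k ∧ l ≠ k + 1), BB τ t z (a l)
    = AA τ t z (a 0) (a m) * ∏ l ∈ Finset.Ioo 0 m, BB τ t z (a l) := by
  intro m
  induction m with
  | zero => omega
  | succ m ih =>
    intro _
    rcases Nat.eq_zero_or_pos m with rfl | hm
    · rw [Finset.sum_range_one,
        show (Finset.range 2).filter (fun l => l ≠ 0 ∧ l ≠ 0 + 1) = ∅ by decide,
        show Finset.Ioo 0 1 = ∅ by decide]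
    · have IH := ih hm
      rw [Finset.sum_range_succ]
      have hsplit : ∀ k ∈ Finset.range m,
          AA τ t z (a k) (a (k + 1)) *
            ∏ l ∈ (Finset.range (m + 2)).filter (fun l => l ≠ k ∧ l ≠ k + 1), BB τ t z (a l)
          = BB τ t z (a (m + 1)) * (AA τ t z (a k) (a (k + 1)) *
            ∏ l ∈ (Finset.range (m + 1)).filter (fun l => l ≠ k ∧ l ≠ k + 1), BB τ t z (a l)) := by
        intro k hk
        have hk' : k < m := Finset.mem_range.mp hk
        have hins : (Finset.range (m + 2)).filter (fun l => l ≠ k ∧ l ≠ k + 1) =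
            insert (m + 1) ((Finset.range (m + 1)).filter (fun l => l ≠ k ∧ l ≠ k + 1)) := by
          ext l
          simp only [Finset.mem_filter, Finset.mem_insert, Finset.mem_range]
          omega
        rw [hins, Finset.prod_insert (by
          simp only [Finset.mem_filter, Finset.mem_range]
          omega)]
        ring
      rw [Finset.sum_congr rfl hsplit, ← Finset.mul_sum, IH]
      have hlast : (Finset.range (m + 2)).filter (fun l => l ≠ m ∧ l ≠ m + 1) =
          Finset.range m := by
        ext l
        simp only [Finset.mem_filter, Finset.mem_range]
        omega
      rw [hlast]
      have hr : Finset.range m = insert 0 (Finset.Ioo 0 m) := by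
        ext l
        simp only [Finset.mem_insert, Finset.mem_Ioo, Finset.mem_range]
        omega
      rw [hr, Finset.prod_insert (by simp)]
      have hIoo : Finset.Ioo 0 (m + 1) = insert m (Finset.Ioo 0 m) := by
        ext l
        simp only [Finset.mem_insert, Finset.mem_Ioo]
        omega
      rw [hIoo, Finset.prod_insert (by simp)]
      have h3 := three_term hτ t z (a 0) (a m) (a (m + 1))
      have hA := AA_swap τ t z (a 0) (a (m + 1))
      linear_combination (∏ l ∈ Finset.Ioo 0 m, BB τ t z (a l)) * h3 -
        (∏ l ∈ Finset.Ioo 0 m, BB τ t z (a l)) * BB τ t z (a m) * hA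

end FayAux

open FayAux in
/-- **Generalized Fay trisecant identity** (denominator-cleared form) on a genus
one curve `ℂ/(ℤ + τℤ)`: for any `n ≥ 1`, any `α : ZMod n → ℂ` and any `t, z ∈ ℂ`,
`∑_k θ₁₁(t+z−α_k−α_{k+1}) θ₁₁(α_k−α_{k+1}) ∏_{l ∉ {k,k+1}} θ₁₁(t−α_l) θ₁₁(z−α_l) = 0`. -/
theorem generalized_fay_trisecant (τ : ℂ) (hτ : 0 < τ.im)
    (n : ℕ) [NeZero n] (α : ZMod n → ℂ) (t z : ℂ) :
    ∑ k : ZMod n,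
      theta11 τ (t + z - α k - α (k + 1)) * theta11 τ (α k - α (k + 1)) *
        ∏ l ∈ Finset.univ.filter (fun l : ZMod n => l ≠ k ∧ l ≠ k + 1),
          (theta11 τ (t - α l) * theta11 τ (z - α l)) = 0 := by
  rcases lt_or_ge n 2 with hn | hn
  · have hn1 : n = 1 := by have := Nat.pos_of_ne_zero (NeZero.ne n); omega
    subst hn1
    refine Finset.sum_eq_zero fun k _ => ?_
    rw [show k + 1 = k from Subsingleton.elim _ _, sub_self, theta11_zero, mul_zero, zero_mul]
  · obtain ⟨m, rfl⟩ : ∃ m, n = m + 2 := ⟨n - 2, by omega⟩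
    haveI : Fact (1 < m + 2) := ⟨by omega⟩
    set a : ℕ → ℂ := fun i => α (i : ZMod (m + 2)) with ha
    have hcast : ∀ i : ZMod (m + 2), α i = a i.val := by
      intro i
      rw [ha]
      exact congrArg α (ZMod.natCast_zmod_val i).symm
    have hstep1 : ∑ k : ZMod (m + 2),
        theta11 τ (t + z - α k - α (k + 1)) * theta11 τ (α k - α (k + 1)) *
          ∏ l ∈ Finset.univ.filter (fun l : ZMod (m + 2) => l ≠ k ∧ l ≠ k + 1),
            (theta11 τ (t - α l) * theta11 τ (z - α l))
        = ∑ i ∈ Finset.range (m + 2), AA τ t z (a i) (a (i + 1)) *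
            ∏ j ∈ (Finset.range (m + 2)).filter (fun j => j ≠ i ∧ j ≠ (i + 1) % (m + 2)),
              BB τ t z (a j) := by
      refine Finset.sum_nbij' (fun k : ZMod (m + 2) => k.val) (fun i => (i : ZMod (m + 2)))
        (fun k _ => Finset.mem_range.mpr (ZMod.val_lt k)) (fun i _ => Finset.mem_univ _)
        (fun k _ => ZMod.natCast_zmod_val k)
        (fun i hi => ZMod.val_cast_of_lt (Finset.mem_range.mp hi)) (fun k _ => ?_)
      have hk2 : α (k + 1) = a (k.val + 1) := by
        refine (congrArg α ?_).symm
        push_cast [ZMod.natCast_zmod_val]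
        ring
      have hval1 : (k + 1).val = (k.val + 1) % (m + 2) := by
        rw [ZMod.val_add, ZMod.val_one]
      rw [hcast k, hk2]
      simp only [AA, BB]
      congr 1
      refine Finset.prod_nbij' (fun l : ZMod (m + 2) => l.val) (fun j => (j : ZMod (m + 2)))
        ?_ ?_ (fun l _ => ZMod.natCast_zmod_val l) ?_ ?_
      · intro l hl
        simp only [Finset.mem_filter, Finset.mem_univ, true_and] at hl
        simp only [Finset.mem_filter, Finset.mem_range]
        refine ⟨ZMod.val_lt l, fun h => hl.1 (ZMod.val_injective _ h), fun h => hl.2 ?_⟩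
        exact ZMod.val_injective _ (by rw [h, hval1])
      · intro j hj
        simp only [Finset.mem_filter, Finset.mem_range] at hj
        simp only [Finset.mem_filter, Finset.mem_univ, true_and]
        constructor
        · intro h
          exact hj.2.1 (by rw [← ZMod.val_cast_of_lt hj.1, h])
        · intro h
          exact hj.2.2 (by rw [← ZMod.val_cast_of_lt hj.1, h, hval1])
      · intro j hj
        exact ZMod.val_cast_of_lt (Finset.mem_range.mp (Finset.mem_filter.mp hj).1)
      · intro l _
        rw [hcast l]
    rw [hstep1, Finset.sum_range_succ]
    have h2 : ∑ i ∈ Finset.range (m + 1), AA τ t z (a i) (a (i + 1)) *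
            ∏ j ∈ (Finset.range (m + 2)).filter (fun j => j ≠ i ∧ j ≠ (i + 1) % (m + 2)),
              BB τ t z (a j)
        = ∑ i ∈ Finset.range (m + 1), AA τ t z (a i) (a (i + 1)) *
            ∏ j ∈ (Finset.range (m + 2)).filter (fun j => j ≠ i ∧ j ≠ i + 1),
              BB τ t z (a j) := by
      refine Finset.sum_congr rfl fun i hi => ?_
      rw [Nat.mod_eq_of_lt (by have := Finset.mem_range.mp hi; omega)]
    rw [h2, path hτ t z a (m + 1) (by omega)]
    have hlast : (Finset.range (m + 2)).filter
        (fun j => j ≠ m + 1 ∧ j ≠ (m + 1 + 1) % (m + 2)) = Finset.Ioo 0 (m + 1) := by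
      have h0 : (m + 1 + 1) % (m + 2) = 0 := Nat.mod_self (m + 2)
      ext j
      simp only [Finset.mem_filter, Finset.mem_range, Finset.mem_Ioo, h0]
      omega
    have ha2 : a (m + 1 + 1) = a 0 := by
      rw [ha]
      exact congrArg α (ZMod.natCast_self (m + 2))
    rw [hlast, ha2]
    have hA := AA_swap τ t z (a 0) (a (m + 1))
    linear_combination (∏ l ∈ Finset.Ioo 0 (m + 1), BB τ t z (a l)) * hA
end
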